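/- Let T be the infinite binary tree with weight w(t) = (1+|t|)^{-2}. Fix a positive integer n and μ ∈ ℓ₁(T) with ‖μ‖₁ ≤ 1. Let Υ^μ be the n-essential subtree of T (nodes included starting from the root while ‖μ‖(t) > |t|/n, stopping where ‖μ‖(t) ≤ |t|/n). Then Σ_{u ∉ Υ^μ} s_μ(u)² w(u) ≤ 1/n, where s_μ(u) = Σ_{v ⪰ u} μ(v). -/

import Mathlib

open scoped ENNReal

/-- A node of the infinite binary tree `T` is a finite binary string;
its level `|t|` is its length. -/
abbrev Node : Type := List Bool

/-- `μ` belongs to `ℓ₁(T)`, i.e. `Σ_t |μ(t)| < ∞`. -/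
def MemL1 (μ : Node → ℝ) : Prop := Summable fun t : Node => |μ t|

/-- The `ℓ₁(T)` norm `‖μ‖₁ = Σ_t |μ(t)|`. -/
noncomputable def l1Norm (μ : Node → ℝ) : ℝ := ∑' t : Node, |μ t|

/-- `(V*μ)(t) = Σ_{u ⪰ t} μ(u)`, the sum over all nodes `u` having `t` as a prefix
(including `u = t`). -/
noncomputable def Vstar (μ : Node → ℝ) (t : Node) : ℝ := ∑' u : {u : Node // t <+: u}, μ u.1

/-- The weight `w(t) = (1 + |t|)^{-β}`. -/
noncomputable def wgt (β : ℝ) (t : Node) : ℝ := ((1 : ℝ) + (t.length : ℝ)) ^ (-β)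

/-- The squared distance of `f, g` in the weighted space `ℓ₂(T,W)`,
`Σ_t w(t) (f(t) - g(t))²`, computed in `ℝ≥0∞`. -/
noncomputable def distSqW (β : ℝ) (f g : Node → ℝ) : ℝ≥0∞ :=
  ∑' t : Node, ENNReal.ofReal (wgt β t * (f t - g t) ^ 2)

/-- The variation of `μ` at `t`: `‖μ‖(t) = Σ_{u ⪰ t} |μ(u)|`. -/
noncomputable def varAt (μ : Node → ℝ) (t : Node) : ℝ :=
  ∑' u : {u : Node // t <+: u}, |μ u.1|

/-- The `n`-essential subtree `Υ^μ`: starting from the root, a node is included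
as long as `‖μ‖(t) > |t|/n`; the construction stops at nodes with `‖μ‖(t) ≤ |t|/n`.
Thus `t ∈ Υ^μ` iff every prefix `s` of `t` (including `t` itself) satisfies
`‖μ‖(s) > |s|/n`. -/
def essTree (n : ℕ) (μ : Node → ℝ) : Set Node :=
  {t : Node | ∀ s : Node, s <+: t → (s.length : ℝ) / (n : ℝ) < varAt μ s}

/-- The terminal (leaf) nodes of a subtree `Υ`: nodes of `Υ` none of whose children
belongs to `Υ`. -/
def terminalNodes (Υ : Set Node) : Set Node :=
  {t : Node | t ∈ Υ ∧ ∀ b : Bool, t ++ [b] ∉ Υ}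

/-- For the critical weight `w(t) = (1+|t|)^{-2}`, a positive integer `n`, and
`μ ∈ ℓ₁(T)` with `‖μ‖₁ ≤ 1`, the contribution of the complement of the
`n`-essential subtree is small: `Σ_{u ∉ Υ^μ} s_μ(u)² w(u) ≤ 1/n`. -/
-- AUX START
lemma varAt_nonneg (μ : Node → ℝ) (t : Node) : 0 ≤ varAt μ t :=
  tsum_nonneg fun _ => abs_nonneg _

lemma abs_Vstar_le (μ : Node → ℝ) (hμ : MemL1 μ) (t : Node) :
    |Vstar μ t| ≤ varAt μ t := by
  have h := norm_tsum_le_tsum_norm (f := fun u : {u : Node // t <+: u} => μ u.1)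
    (hμ.subtype _)
  simpa [Vstar, varAt, Real.norm_eq_abs] using h

lemma varAt_anti (μ : Node → ℝ) (hμ : MemL1 μ) {s t : Node} (h : s <+: t) :
    varAt μ t ≤ varAt μ s := by
  refine Summable.tsum_le_tsum_of_inj (fun u => ⟨u.1, h.trans u.2⟩) ?_ ?_ (fun b => le_rfl)
    (hμ.subtype _) (hμ.subtype _)
  · intro a b hab
    simpa [Subtype.ext_iff] using hab
  · intro c _; exact abs_nonneg _

lemma ofReal_varAt (μ : Node → ℝ) (hμ : MemL1 μ) (t : Node) :
    ENNReal.ofReal (varAt μ t) = ∑' u : {u : Node // t <+: u}, ENNReal.ofReal |μ u.1| :=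
  ENNReal.ofReal_tsum_of_nonneg (fun _ => abs_nonneg _) (hμ.subtype _)

lemma wgt_two (t : Node) : wgt 2 t = ((1:ℝ) + t.length)⁻¹ ^ 2 := by
  have h : (0:ℝ) ≤ 1 + t.length := by positivity
  rw [wgt, Real.rpow_neg h, show ((2:ℝ)) = ((2:ℕ):ℝ) by norm_num, Real.rpow_natCast,
    inv_pow]

lemma wgt_nonneg (t : Node) : 0 ≤ wgt 2 t := by
  rw [wgt_two]; positivity

lemma inv_sq_le_tele {x : ℝ} (hx : 1 ≤ x) : ((1 + x))⁻¹ ^ 2 ≤ 1/x - 1/(x+1) := by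
  have hx0 : 0 < x := by linarith
  have h1 : 1/x - 1/(x+1) = ((x*(x+1)))⁻¹ := by field_simp; ring
  rw [h1, inv_pow]
  have h2 : x*(x+1) ≤ (1+x)^2 := by nlinarith
  have h3 : (0:ℝ) < x*(x+1) := by positivity
  exact inv_anti₀ h3 h2

lemma sum_inv_sq_le {m : ℕ} (hm : 1 ≤ m) (L : ℕ) :
    ∑ j ∈ Finset.Icc m L, ((1:ℝ) + j)⁻¹ ^ 2 ≤ 1 / m := by
  have hm0 : (0:ℝ) < m := by exact_mod_cast hm
  rcases le_or_gt m L with h | h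
  · obtain ⟨d, rfl⟩ := Nat.exists_eq_add_of_le h
    have key : ∀ d : ℕ, ∑ j ∈ Finset.Icc m (m + d), ((1:ℝ) + j)⁻¹ ^ 2
        ≤ 1 / m - 1 / ((m:ℝ) + d + 1) := by
      intro d
      induction d with
      | zero =>
        simp only [Nat.add_zero, Finset.Icc_self, Finset.sum_singleton, Nat.cast_zero]
        have := inv_sq_le_tele (x := (m:ℝ)) (by exact_mod_cast hm)
        ring_nf at this ⊢
        linarith
      | succ d ih =>
        rw [show m + (d + 1) = (m + d) + 1 by ring, Finset.sum_Icc_succ_top (by omega)]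
        have hx1 : (1:ℝ) ≤ (m:ℝ) + d + 1 := by
          have : (0:ℝ) ≤ d := Nat.cast_nonneg d
          linarith
        have htele := inv_sq_le_tele (x := (m:ℝ) + d + 1) hx1
        have hcast : ((m + d + 1 : ℕ) : ℝ) = (m:ℝ) + d + 1 := by push_cast; ring
        rw [hcast]
        push_cast
        ring_nf at htele ih ⊢
        linarith
    calc ∑ j ∈ Finset.Icc m (m + d), ((1:ℝ) + j)⁻¹ ^ 2
        ≤ 1 / m - 1 / ((m:ℝ) + d + 1) := key d
      _ ≤ 1 / m := by
          have h2 : (0:ℝ) < (m:ℝ) + d + 1 := by positivity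
          have := one_div_pos.mpr h2
          linarith
  · rw [Finset.Icc_eq_empty (by omega)]
    simp [le_of_lt (one_div_pos.mpr hm0)]

/-- The set of "stopping levels" along the path to `u`. -/
def stopSet (n : ℕ) (μ : Node → ℝ) (u : Node) : Set ℕ :=
  {j | j ≤ u.length ∧ varAt μ (u.take j) ≤ (j : ℝ) / (n : ℝ)}

/-- The level of the minimal stopped prefix of `u`. -/
noncomputable def stopIdx (n : ℕ) (μ : Node → ℝ) (u : Node) : ℕ :=
  sInf (stopSet n μ u)

lemma notMem_essTree_iff {n : ℕ} {μ : Node → ℝ} {u : Node} :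
    u ∉ essTree n μ ↔ ∃ s : Node, s <+: u ∧ varAt μ s ≤ (s.length : ℝ) / (n : ℝ) := by
  simp only [essTree, Set.mem_setOf_eq, not_forall, not_lt, exists_prop]

lemma stopSet_nonempty {n : ℕ} {μ : Node → ℝ} {u : Node} (hu : u ∉ essTree n μ) :
    (stopSet n μ u).Nonempty := by
  obtain ⟨s, hs, hvar⟩ := notMem_essTree_iff.mp hu
  refine ⟨s.length, hs.length_le, ?_⟩
  rwa [← List.prefix_iff_eq_take.mp hs]

lemma stopIdx_spec {n : ℕ} {μ : Node → ℝ} {u : Node} (hu : u ∉ essTree n μ) :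
    stopIdx n μ u ≤ u.length ∧
      varAt μ (u.take (stopIdx n μ u)) ≤ (stopIdx n μ u : ℝ) / (n : ℝ) :=
  Nat.sInf_mem (stopSet_nonempty hu)

lemma stopIdx_pos {n : ℕ} {μ : Node → ℝ} (hroot : (0:ℝ) < varAt μ [])
    {u : Node} (hu : u ∉ essTree n μ) : 1 ≤ stopIdx n μ u := by
  by_contra h
  have h0 : stopIdx n μ u = 0 := by omega
  have := (stopIdx_spec hu).2
  rw [h0] at this
  simp only [List.take_zero, Nat.cast_zero, zero_div] at this
  linarith

lemma take_mem_essTree {n : ℕ} {μ : Node → ℝ} {v : Node} {j : ℕ}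
    (hj : j < stopIdx n μ v) : v.take j ∈ essTree n μ := by
  intro s hs
  have hlen : s.length ≤ j ⊓ v.length := by
    have := hs.length_le
    rwa [List.length_take] at this
  have hsv : s = v.take s.length := by
    have h1 := List.prefix_iff_eq_take.mp hs
    conv_lhs => rw [h1]
    rw [List.take_take]
    congr 1
    omega
  have hlt : s.length < stopIdx n μ v := lt_of_le_of_lt (le_trans hlen inf_le_left) hj
  have hnot := Nat.notMem_of_lt_sInf (s := stopSet n μ v) hlt
  simp only [stopSet, Set.mem_setOf_eq, not_and, not_le] at hnot
  have := hnot (by omega)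
  rwa [← hsv] at this

lemma take_notMem_essTree {n : ℕ} {μ : Node → ℝ} {v : Node} (hv : v ∉ essTree n μ)
    {j : ℕ} (hmj : stopIdx n μ v ≤ j) : v.take j ∉ essTree n μ := by
  set m := stopIdx n μ v with hm
  have hspec := stopIdx_spec hv
  intro hmem
  have hpre : v.take m <+: v.take j := by
    rw [List.prefix_iff_eq_take, List.length_take, List.take_take]
    congr 1
    omega
  have := hmem _ hpre
  rw [List.length_take] at this
  have hminl : (m ⊓ v.length) = m := by omega
  rw [hminl] at this
  linarith [hspec.2]

lemma stopIdx_take {n : ℕ} {μ : Node → ℝ} {v : Node} (hv : v ∉ essTree n μ)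
    {j : ℕ} (hj : j ≤ v.length) (hmj : stopIdx n μ v ≤ j) :
    stopIdx n μ (v.take j) = stopIdx n μ v := by
  set m := stopIdx n μ v with hm
  have hspec := stopIdx_spec hv
  have hu : v.take j ∉ essTree n μ := take_notMem_essTree hv hmj
  have hulen : (v.take j).length = j := by rw [List.length_take]; omega
  apply le_antisymm
  · apply Nat.sInf_le
    refine ⟨by rw [hulen]; exact hmj, ?_⟩
    rw [List.take_take, show m ⊓ j = m by omega]
    exact hspec.2
  · have hspecu := stopIdx_spec hu
    apply Nat.sInf_le
    have h1 : stopIdx n μ (v.take j) ≤ j := le_trans hspecu.1 (le_of_eq hulen)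
    refine ⟨by omega, ?_⟩
    have h2 := hspecu.2
    rwa [List.take_take, show stopIdx n μ (v.take j) ⊓ j = stopIdx n μ (v.take j) by omega]
      at h2

theorem outside_essential_subtree_bound (n : ℕ) (hn : 0 < n) (μ : Node → ℝ)
    (hμ : MemL1 μ) (hμ1 : l1Norm μ ≤ 1) :
    (∑' u : {u : Node // u ∉ essTree n μ}, ENNReal.ofReal (wgt 2 u.1 * Vstar μ u.1 ^ 2)) ≤
      ENNReal.ofReal (1 / (n : ℝ)) := by
  classical
  rcases le_or_gt (varAt μ []) 0 with hroot | hroot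
  · have hzero : ∀ t, μ t = 0 := by
      intro t
      have hle : |μ t| ≤ varAt μ [] := by
        have h := Summable.le_tsum (hμ.subtype {u : Node | ([] : Node) <+: u})
          ⟨t, List.nil_prefix⟩ (fun _ _ => abs_nonneg _)
        exact h
      have h0 : |μ t| = 0 := le_antisymm (hle.trans hroot) (abs_nonneg _)
      exact abs_eq_zero.mp h0
    have hV : ∀ t : Node, Vstar μ t = 0 := by
      intro t; simp [Vstar, hzero]
    have hz : ∀ u : {u : Node // u ∉ essTree n μ},
        ENNReal.ofReal (wgt 2 u.1 * Vstar μ u.1 ^ 2) = 0 := by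
      intro u; simp [hV]
    rw [tsum_congr hz, tsum_zero]
    exact zero_le
  · set ν : Node → ℝ≥0∞ := fun v => ENNReal.ofReal |μ v| with hν
    set c : Node → ℝ≥0∞ :=
      fun u => ENNReal.ofReal (wgt 2 u * (stopIdx n μ u : ℝ) / n) with hc
    set F : Node → Node → ℝ≥0∞ :=
      fun u v => if u ∉ essTree n μ ∧ u <+: v then c u * ν v else 0 with hF
    -- Step 1: termwise bound
    have step1 : ∀ u : {u : Node // u ∉ essTree n μ},
        ENNReal.ofReal (wgt 2 u.1 * Vstar μ u.1 ^ 2) ≤ ∑' v : Node, F u.1 v := by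
      rintro ⟨u, hu⟩
      dsimp only
      set m := stopIdx n μ u with hm
      have hspec := stopIdx_spec hu
      have h1 : |Vstar μ u| ≤ varAt μ u := abs_Vstar_le μ hμ u
      have h2 : varAt μ u ≤ varAt μ (u.take m) := varAt_anti μ hμ (List.take_prefix m u)
      have h3 : varAt μ (u.take m) ≤ (m:ℝ)/n := hspec.2
      have hVn : 0 ≤ varAt μ u := varAt_nonneg μ u
      have hsq : Vstar μ u ^ 2 ≤ ((m:ℝ)/n) * varAt μ u := by
        nlinarith [sq_abs (Vstar μ u), abs_nonneg (Vstar μ u)]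
      have hwn := wgt_nonneg u
      have hcn : (0:ℝ) ≤ wgt 2 u * (m:ℝ)/n :=
        div_nonneg (mul_nonneg hwn (Nat.cast_nonneg m)) (Nat.cast_nonneg n)
      have hb1 : ENNReal.ofReal (wgt 2 u * Vstar μ u ^ 2)
          ≤ ENNReal.ofReal ((wgt 2 u * (m:ℝ)/n) * varAt μ u) := by
        apply ENNReal.ofReal_le_ofReal
        calc wgt 2 u * Vstar μ u ^ 2 ≤ wgt 2 u * (((m:ℝ)/n) * varAt μ u) :=
              mul_le_mul_of_nonneg_left hsq hwn
          _ = (wgt 2 u * (m:ℝ)/n) * varAt μ u := by ring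
      rw [ENNReal.ofReal_mul hcn, ofReal_varAt μ hμ u] at hb1
      calc ENNReal.ofReal (wgt 2 u * Vstar μ u ^ 2)
          ≤ ENNReal.ofReal (wgt 2 u * (m:ℝ)/n)
              * ∑' v : {v : Node // u <+: v}, ENNReal.ofReal |μ v.1| := hb1
        _ = ∑' v : {v : Node // u <+: v}, c u * ν v.1 := by
              rw [ENNReal.tsum_mul_left]
        _ = ∑' v : Node, Set.indicator {v : Node | u <+: v} (fun v => c u * ν v) v :=
              tsum_subtype {v : Node | u <+: v} (fun v => c u * ν v)
        _ = ∑' v : Node, F u v := by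
              apply tsum_congr; intro v
              by_cases hv : u <+: v
              · simp [Set.indicator, hF, hv, hu]
              · simp [Set.indicator, hF, hv]
    -- Step A: full bound by the double sum
    have stepA : (∑' u : {u : Node // u ∉ essTree n μ},
          ENNReal.ofReal (wgt 2 u.1 * Vstar μ u.1 ^ 2))
        ≤ ∑' (u : Node) (v : Node), F u v := by
      calc (∑' u : {u : Node // u ∉ essTree n μ},
              ENNReal.ofReal (wgt 2 u.1 * Vstar μ u.1 ^ 2))
          ≤ ∑' u : {u : Node // u ∉ essTree n μ}, ∑' v : Node, F u.1 v :=
            ENNReal.tsum_le_tsum step1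
        _ = ∑' u : Node, Set.indicator {u : Node | u ∉ essTree n μ}
              (fun u => ∑' v : Node, F u v) u :=
            tsum_subtype {u : Node | u ∉ essTree n μ} (fun u => ∑' v : Node, F u v)
        _ ≤ ∑' (u : Node) (v : Node), F u v := by
            apply ENNReal.tsum_le_tsum
            intro u
            by_cases h : u ∈ {u : Node | u ∉ essTree n μ}
            · rw [Set.indicator_of_mem h]
            · rw [Set.indicator_of_notMem h]; exact zero_le
    -- Step 2: per-v bound
    have step2 : ∀ v : Node, (∑' u : Node, F u v) ≤ ENNReal.ofReal (1/(n:ℝ)) * ν v := by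
      intro v
      by_cases hv : v ∈ essTree n μ
      · have hzero : ∀ u, F u v = 0 := by
          intro u
          rw [hF]
          dsimp only
          rw [if_neg]
          rintro ⟨hu, hpre⟩
          exact hu (fun s hs => hv s (hs.trans hpre))
        simp [hzero]
      · set m := stopIdx n μ v with hm
        have hm1 : 1 ≤ m := stopIdx_pos hroot hv
        have hspec := stopIdx_spec hv
        set L := v.length with hL
        have hinj : ∀ i ∈ Finset.range (L+1), ∀ j ∈ Finset.range (L+1),
            v.take i = v.take j → i = j := by
          intro i hi j hj hij
          have hlen : (v.take i).length = (v.take j).length := by rw [hij]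
          rw [List.length_take, List.length_take] at hlen
          simp only [Finset.mem_range] at hi hj
          omega
        have hsum : (∑' u : Node, F u v)
            = ∑ j ∈ Finset.range (L+1), F (v.take j) v := by
          rw [tsum_eq_sum (s := (Finset.range (L+1)).image (fun j => v.take j))
            (by
              intro u hu
              rw [hF]; dsimp only; rw [if_neg]
              rintro ⟨h1, h2⟩
              apply hu
              simp only [Finset.mem_image, Finset.mem_range]
              exact ⟨u.length, by have := h2.length_le; omega,
                (List.prefix_iff_eq_take.mp h2).symm⟩)]
          exact Finset.sum_image hinj
        have hterm : ∀ j ∈ Finset.range (L+1),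
            F (v.take j) v ≤ (if m ≤ j then
              ENNReal.ofReal (((1:ℝ)+j)⁻¹^2 * ((m:ℝ)/n)) else 0) * ν v := by
          intro j hj
          simp only [Finset.mem_range] at hj
          have hjL : j ≤ L := by omega
          by_cases hmj : m ≤ j
          · rw [if_pos hmj, hF]
            dsimp only
            rw [if_pos ⟨take_notMem_essTree hv hmj, List.take_prefix j v⟩]
            apply mul_le_mul_left
            rw [hc]
            dsimp only
            apply ENNReal.ofReal_le_ofReal
            rw [stopIdx_take hv hjL hmj, wgt_two, List.length_take,
              show j ⊓ v.length = j from by omega]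
            exact le_of_eq (by ring)
          · rw [if_neg hmj, hF]
            dsimp only
            rw [if_neg]
            · simp
            rintro ⟨h1, _⟩
            exact h1 (take_mem_essTree (by omega))
        calc (∑' u : Node, F u v) = ∑ j ∈ Finset.range (L+1), F (v.take j) v := hsum
          _ ≤ ∑ j ∈ Finset.range (L+1), (if m ≤ j then
                ENNReal.ofReal (((1:ℝ)+j)⁻¹^2 * ((m:ℝ)/n)) else 0) * ν v :=
              Finset.sum_le_sum hterm
          _ = (∑ j ∈ Finset.range (L+1), if m ≤ j then
                ENNReal.ofReal (((1:ℝ)+j)⁻¹^2 * ((m:ℝ)/n)) else 0) * ν v := by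
              rw [Finset.sum_mul]
          _ ≤ ENNReal.ofReal (1/(n:ℝ)) * ν v := by
              apply mul_le_mul_left
              rw [← Finset.sum_filter]
              have hfil : (Finset.range (L+1)).filter (fun j => m ≤ j)
                  = Finset.Icc m L := by
                ext j
                simp only [Finset.mem_filter, Finset.mem_range, Finset.mem_Icc]
                omega
              rw [hfil, ← ENNReal.ofReal_sum_of_nonneg (fun i _ => by positivity)]
              apply ENNReal.ofReal_le_ofReal
              rw [← Finset.sum_mul]
              have hm0 : (0:ℝ) < m := by exact_mod_cast hm1
              calc (∑ j ∈ Finset.Icc m L, ((1:ℝ)+j)⁻¹^2) * ((m:ℝ)/n)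
                  ≤ (1/(m:ℝ)) * ((m:ℝ)/n) :=
                    mul_le_mul_of_nonneg_right (sum_inv_sq_le hm1 L) (by positivity)
                _ = 1/(n:ℝ) := by field_simp
    -- Step 3: total
    have hνsum : (∑' v : Node, ν v) ≤ 1 := by
      rw [hν, ← ENNReal.ofReal_tsum_of_nonneg (fun _ => abs_nonneg _) hμ]
      calc ENNReal.ofReal (∑' t : Node, |μ t|) ≤ ENNReal.ofReal 1 :=
            ENNReal.ofReal_le_ofReal hμ1
        _ = 1 := ENNReal.ofReal_one
    calc (∑' u : {u : Node // u ∉ essTree n μ},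
            ENNReal.ofReal (wgt 2 u.1 * Vstar μ u.1 ^ 2))
        ≤ ∑' (u : Node) (v : Node), F u v := stepA
      _ = ∑' (v : Node) (u : Node), F u v := ENNReal.tsum_comm
      _ ≤ ∑' v : Node, ENNReal.ofReal (1/(n:ℝ)) * ν v := ENNReal.tsum_le_tsum step2
      _ = ENNReal.ofReal (1/(n:ℝ)) * ∑' v : Node, ν v := ENNReal.tsum_mul_left
      _ ≤ ENNReal.ofReal (1/(n:ℝ)) * 1 := mul_le_mul_right hνsum _
      _ = ENNReal.ofReal (1/(n:ℝ)) := mul_one _
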